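/- Let G be a connected graph and C = x₁...xₐ a longest cycle in G. Suppose z is a vertex not on C with at least 0.47·d₁ neighbours on C, where a ≤ 1.01·d₁. Then there are at least 0.4·d₁ indices i ∈ [a] such that both x_{i-1} and x_{i+1} (indices mod a) are neighbours of z. -/

import Mathlib

open SimpleGraph

/-- Cyclic addition on `Fin a`: `cycAdd i m = (i + m) mod a`. -/
def cycAdd {a : ℕ} (i : Fin a) (m : ℕ) : Fin a :=
  ⟨(i.val + m) % a, Nat.mod_lt _ (Nat.lt_of_le_of_lt (Nat.zero_le _) i.isLt)⟩

lemma cycAdd_val {a : ℕ} (i : Fin a) (m : ℕ) : (cycAdd i m).val = (i.val + m) % a := rfl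

lemma cycAdd_cycAdd {a : ℕ} (i : Fin a) (m n : ℕ) :
    cycAdd (cycAdd i m) n = cycAdd i (m + n) := by
  apply Fin.ext
  simp only [cycAdd_val]
  rw [Nat.mod_add_mod, Nat.add_assoc]

lemma cycAdd_a {a : ℕ} (i : Fin a) : cycAdd i a = i := by
  apply Fin.ext
  simp only [cycAdd_val]
  rw [Nat.add_mod_right]
  exact Nat.mod_eq_of_lt i.isLt

lemma cycAdd_modeq {a : ℕ} (i : Fin a) {u v : ℕ} (h : cycAdd i u = cycAdd i v) :
    u ≡ v [MOD a] := by
  have h' : (i.val + u) % a = (i.val + v) % a := congrArg Fin.val h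
  exact Nat.ModEq.add_left_cancel' i.val h'

def chainWalk {V : Type*} {G : SimpleGraph V} {a : ℕ} (x : Fin a → V)
    (hcyc : ∀ i : Fin a, G.Adj (x i) (x (cycAdd i 1))) (i₀ : Fin a) :
    ∀ m : ℕ, G.Walk (x (cycAdd i₀ 1)) (x (cycAdd i₀ (1 + m)))
  | 0 => Walk.nil
  | (m+1) => (chainWalk x hcyc i₀ m).concat
      ((cycAdd_cycAdd i₀ (1 + m) 1) ▸ hcyc (cycAdd i₀ (1 + m)))

lemma chainWalk_length {V : Type*} {G : SimpleGraph V} {a : ℕ} (x : Fin a → V)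
    (hcyc : ∀ i : Fin a, G.Adj (x i) (x (cycAdd i 1))) (i₀ : Fin a) (m : ℕ) :
    (chainWalk x hcyc i₀ m).length = m := by
  induction m with
  | zero => rfl
  | succ m ih => rw [chainWalk, Walk.length_concat, ih]

lemma chainWalk_support {V : Type*} {G : SimpleGraph V} {a : ℕ} (x : Fin a → V)
    (hcyc : ∀ i : Fin a, G.Adj (x i) (x (cycAdd i 1))) (i₀ : Fin a) (m : ℕ) :
    (chainWalk x hcyc i₀ m).support =
      (List.range (m+1)).map (fun t => x (cycAdd i₀ (1 + t))) := by
  induction m with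
  | zero => simp [chainWalk, List.range_succ]
  | succ m ih =>
      rw [chainWalk, Walk.support_concat, ih]
      simp [List.range_succ]

lemma no_consec {V : Type*} {G : SimpleGraph V} {a : ℕ} (ha : 3 ≤ a)
    {x : Fin a → V} (hinj : Function.Injective x)
    (hcyc : ∀ i : Fin a, G.Adj (x i) (x (cycAdd i 1)))
    (hlongest : ∀ (w : V) (p : G.Walk w w), p.IsCycle → p.length ≤ a)
    {z : V} (hz : ∀ i, z ≠ x i) (i₀ : Fin a)
    (h1 : G.Adj z (x i₀)) (h2 : G.Adj z (x (cycAdd i₀ 1))) : False := by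
  set P : G.Walk (x (cycAdd i₀ 1)) (x (cycAdd i₀ (1 + (a-1)))) := chainWalk x hcyc i₀ (a-1)
    with hP
  have hend : cycAdd i₀ (1 + (a-1)) = i₀ := by
    rw [(by omega : 1 + (a-1) = a), cycAdd_a]
  have hsup : P.support = (List.range a).map (fun t => x (cycAdd i₀ (1 + t))) := by
    rw [hP, chainWalk_support, (by omega : a - 1 + 1 = a)]
  have hzP : z ∉ P.support := by
    rw [hsup]
    simp only [List.mem_map, not_exists, not_and]
    rintro t - h
    exact hz _ h.symm
  have hPnd : P.support.Nodup := by
    rw [hsup]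
    refine List.Nodup.map_on ?_ List.nodup_range
    intro s hs t ht h
    have h' := cycAdd_modeq i₀ (hinj h)
    have h'' : s ≡ t [MOD a] := Nat.ModEq.add_left_cancel' 1 h'
    rw [List.mem_range] at hs ht
    calc s = s % a := (Nat.mod_eq_of_lt hs).symm
      _ = t % a := h''
      _ = t := Nat.mod_eq_of_lt ht
  have hQsup : ((P.copy rfl (congrArg x hend)).concat h1.symm).support = P.support ++ [z] := by
    rw [Walk.support_concat, Walk.support_copy]
  have hQpath : ((P.copy rfl (congrArg x hend)).concat h1.symm).IsPath := by
    apply Walk.IsPath.mk'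
    rw [hQsup]
    simp [List.nodup_append, hPnd, hzP]
    intro b hb hbz; exact hzP (hbz ▸ hb)
  have hQedges : ((P.copy rfl (congrArg x hend)).concat h1.symm).edges
      = P.edges ++ [s(x i₀, z)] := by
    rw [Walk.edges_concat, Walk.edges_copy, List.concat_eq_append]
  have hedge : s(z, x (cycAdd i₀ 1)) ∉ ((P.copy rfl (congrArg x hend)).concat h1.symm).edges := by
    rw [hQedges]
    intro hmem
    rcases List.mem_append.mp hmem with hm | hm
    · exact hzP (Walk.fst_mem_support_of_mem_edges P hm)
    · simp only [List.mem_singleton, Sym2.eq_iff] at hm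
      rcases hm with ⟨hza, -⟩ | ⟨-, hxx⟩
      · exact hz i₀ hza
      · have heq : cycAdd i₀ 1 = i₀ := hinj hxx
        have hv : (i₀.val + 1) % a = i₀.val := congrArg Fin.val heq
        have hlt := i₀.isLt
        rcases lt_or_ge (i₀.val + 1) a with h | h
        · rw [Nat.mod_eq_of_lt h] at hv; omega
        · have hia : i₀.val + 1 = a := by omega
          rw [hia, Nat.mod_self] at hv
          omega
  have hWcyc : (Walk.cons h2 ((P.copy rfl (congrArg x hend)).concat h1.symm)).IsCycle :=
    (Walk.cons_isCycle_iff _ h2).mpr ⟨hQpath, hedge⟩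
  have hlen := hlongest z _ hWcyc
  rw [Walk.length_cons, Walk.length_concat, Walk.length_copy, hP, chainWalk_length] at hlen
  omega

/-- Let `G` be a connected graph and let `x₀ x₁ … x_{a-1}` be a longest cycle of `G`
(no cycle of `G` has more than `a` edges). Suppose `z` is a vertex not on the cycle
with at least `0.47·d₁` neighbours on it, and `a ≤ 1.01·d₁`. Then there are at least
`0.4·d₁` positions `i` such that both `x_{i-1}` and `x_{i+1}` (cyclically) are
neighbours of `z`. -/
theorem stmt_17 {V : Type*} [Fintype V] (G : SimpleGraph V) (hconn : G.Connected)
    (d₁ : ℝ) (a : ℕ) (ha : 3 ≤ a) (x : Fin a → V) (hinj : Function.Injective x)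
    (hcyc : ∀ i : Fin a, G.Adj (x i) (x (cycAdd i 1)))
    (hlongest : ∀ (w : V) (p : G.Walk w w), p.IsCycle → p.length ≤ a)
    (z : V) (hz : ∀ i, z ≠ x i)
    (hnbrs : 0.47 * d₁ ≤ ({i : Fin a | G.Adj z (x i)} : Set (Fin a)).ncard)
    (hsize : (a : ℝ) ≤ 1.01 * d₁) :
    0.4 * d₁ ≤
      (({i : Fin a | G.Adj z (x (cycAdd i (a - 1))) ∧ G.Adj z (x (cycAdd i 1))} :
        Set (Fin a)).ncard : ℝ) := by
  classical
  set N : Finset (Fin a) := Finset.univ.filter (fun i => G.Adj z (x i)) with hN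
  set A : Finset (Fin a) := Finset.univ.filter (fun i => G.Adj z (x (cycAdd i (a-1)))) with hA
  set B : Finset (Fin a) := Finset.univ.filter (fun i => G.Adj z (x (cycAdd i 1))) with hB
  have hψφ : ∀ i : Fin a, cycAdd (cycAdd i (a-1)) 1 = i := by
    intro i; rw [cycAdd_cycAdd, (by omega : a - 1 + 1 = a), cycAdd_a]
  have hφψ : ∀ i : Fin a, cycAdd (cycAdd i 1) (a-1) = i := by
    intro i; rw [cycAdd_cycAdd, (by omega : 1 + (a - 1) = a), cycAdd_a]
  -- A = image of N under +1, B = image of N under -(1)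
  have hAim : A = N.image (fun i => cycAdd i 1) := by
    ext i
    simp only [hA, hN, Finset.mem_filter, Finset.mem_univ, true_and, Finset.mem_image]
    constructor
    · intro h; exact ⟨cycAdd i (a-1), h, hψφ i⟩
    · rintro ⟨j, hj, rfl⟩
      rwa [hφψ j]
  have hBim : B = N.image (fun i => cycAdd i (a-1)) := by
    ext i
    simp only [hB, hN, Finset.mem_filter, Finset.mem_univ, true_and, Finset.mem_image]
    constructor
    · intro h; exact ⟨cycAdd i 1, h, hφψ i⟩
    · rintro ⟨j, hj, rfl⟩
      rwa [hψφ j]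
  have hAcard : A.card = N.card := by
    rw [hAim]
    exact Finset.card_image_of_injective _
      (Function.LeftInverse.injective (g := fun i => cycAdd i (a-1)) hφψ)
  have hBcard : B.card = N.card := by
    rw [hBim]
    exact Finset.card_image_of_injective _
      (Function.LeftInverse.injective (g := fun i => cycAdd i 1) hψφ)
  -- no element of N is in A or B
  have hdisj : Disjoint (A ∪ B) N := by
    rw [Finset.disjoint_left]
    intro i hi hiN
    simp only [hN, Finset.mem_filter, Finset.mem_univ, true_and] at hiN
    rcases Finset.mem_union.mp hi with hiA | hiB
    · simp only [hA, Finset.mem_filter, Finset.mem_univ, true_and] at hiA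
      exact no_consec ha hinj hcyc hlongest hz (cycAdd i (a-1)) hiA (by rwa [hψφ i])
    · simp only [hB, Finset.mem_filter, Finset.mem_univ, true_and] at hiB
      exact no_consec ha hinj hcyc hlongest hz i hiN hiB
  have hub : (A ∪ B).card + N.card ≤ a := by
    rw [← Finset.card_union_of_disjoint hdisj]
    calc ((A ∪ B) ∪ N).card ≤ Fintype.card (Fin a) := Finset.card_le_univ _
      _ = a := Fintype.card_fin a
  have hkey : (A ∪ B).card + (A ∩ B).card = A.card + B.card :=
    Finset.card_union_add_card_inter A B
  -- convert the set-ncard statements to finset cards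
  have hnset : ({i : Fin a | G.Adj z (x i)} : Set (Fin a)).ncard = N.card := by
    rw [Set.ncard_eq_toFinset_card']
    congr 1
    ext i
    simp [hN]
  have hgset : ({i : Fin a | G.Adj z (x (cycAdd i (a - 1))) ∧ G.Adj z (x (cycAdd i 1))} :
      Set (Fin a)).ncard = (A ∩ B).card := by
    rw [Set.ncard_eq_toFinset_card']
    congr 1
    ext i
    simp [hA, hB]
  rw [hgset]
  rw [hnset] at hnbrs
  have c1 : ((A ∪ B).card : ℝ) + (A ∩ B).card = A.card + B.card := by exact_mod_cast hkey
  have c2 : ((A ∪ B).card : ℝ) + N.card ≤ a := by exact_mod_cast hub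
  have c3 : (A.card : ℝ) = N.card := by exact_mod_cast hAcard
  have c4 : (B.card : ℝ) = N.card := by exact_mod_cast hBcard
  linarith
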